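/- Let D ⊂ ℝ² be measurable with finite measure and let χ_n be characteristic functions of measurable subsets Ω_n ⊂ D converging weak-* in L^∞(D) to a function χ which is almost everywhere a characteristic function of a set Ω. If f_n → f strongly in L²(D) and g_n ⇀ g weakly in L²(D), then ∫_D χ_n f_n g_n dx → ∫_D χ f g dx. -/

import Mathlib

open MeasureTheory Filter Topology

variable {α : Type*} [MeasurableSpace α] {μ : Measure α} {u v : α → ℝ}

lemma aux_integrable_mul (hu : MemLp u 2 μ) (hv : MemLp v 2 μ) :
    Integrable (fun x => u x * v x) μ := by
  have h := L2.integrable_inner (𝕜 := ℝ) (hu.toLp u) (hv.toLp v)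
  apply h.congr
  filter_upwards [hu.coeFn_toLp, hv.coeFn_toLp] with x h1 h2
  simp [h1, h2, RCLike.inner_apply, mul_comm]

lemma aux_inner_eq (hu : MemLp u 2 μ) (hv : MemLp v 2 μ) :
    (inner ℝ (hu.toLp u) (hv.toLp v) : ℝ) = ∫ x, u x * v x ∂μ := by
  rw [L2.inner_def]
  apply integral_congr_ae
  filter_upwards [hu.coeFn_toLp, hv.coeFn_toLp] with x h1 h2
  simp [h1, h2, RCLike.inner_apply, mul_comm]

lemma aux_norm_sq (hu : MemLp u 2 μ) :
    ‖hu.toLp u‖ ^ 2 = ∫ x, (u x) ^ 2 ∂μ := by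
  rw [← real_inner_self_eq_norm_sq, aux_inner_eq hu hu]
  simp_rw [sq]

lemma aux_CS (hu : MemLp u 2 μ) (hv : MemLp v 2 μ) :
    |∫ x, u x * v x ∂μ| ≤ ‖hu.toLp u‖ * ‖hv.toLp v‖ := by
  rw [← aux_inner_eq hu hv]; exact abs_real_inner_le_norm _ _

lemma aux_norm_mono (hu : MemLp u 2 μ) (hv : MemLp v 2 μ) (h : ∀ x, |u x| ≤ |v x|) :
    ‖hu.toLp u‖ ≤ ‖hv.toLp v‖ := by
  rw [Lp.norm_toLp u hu, Lp.norm_toLp v hv]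
  exact ENNReal.toReal_mono (by simpa using hv.2.ne)
    (eLpNorm_mono_ae (Filter.Eventually.of_forall (by simpa using h)))

lemma aux_tendsto_norm_zero {w : ℕ → α → ℝ} (hw : ∀ n, MemLp (w n) 2 μ)
    (h : Tendsto (fun n => ∫ x, (w n x) ^ 2 ∂μ) atTop (𝓝 0)) :
    Tendsto (fun n => ‖(hw n).toLp (w n)‖) atTop (𝓝 0) := by
  have h2 : Tendsto (fun n => ‖(hw n).toLp (w n)‖ ^ 2) atTop (𝓝 0) := by
    simpa only [aux_norm_sq] using h
  have := (Real.continuous_sqrt.tendsto 0).comp h2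
  simp only [Function.comp_def, Real.sqrt_zero] at this
  refine this.congr fun n => ?_
  rw [Real.sqrt_sq (norm_nonneg _)]

lemma aux_memLp_ind {s : Set α} (hs : MeasurableSet s) (hu : MemLp u 2 μ) :
    MemLp (fun x => Set.indicator s (fun _ => (1:ℝ)) x * u x) 2 μ := by
  refine MemLp.of_le hu ((measurable_const.indicator hs).aestronglyMeasurable.mul hu.1)
    (Filter.Eventually.of_forall fun x => ?_)
  by_cases h : x ∈ s <;> simp [h, abs_nonneg]

lemma aux_int_ind {s : Set α} {φ : α → ℝ} (hs : MeasurableSet s) (hφ : Integrable φ μ) :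
    Integrable (fun x => Set.indicator s (fun _ => (1:ℝ)) x * φ x) μ :=
  hφ.bdd_mul (c := 1) (measurable_const.indicator hs).aestronglyMeasurable
    (Filter.Eventually.of_forall fun x => by by_cases h : x ∈ s <;> simp [h])


theorem tendsto_integral_char_mul_strong_mul_weak
    (D : Set (Fin 2 → ℝ)) (hD : MeasurableSet D) (hDfin : volume D < ⊤)
    (Ω : Set (Fin 2 → ℝ)) (Ωn : ℕ → Set (Fin 2 → ℝ))
    (hΩ : MeasurableSet Ω) (hΩD : Ω ⊆ D)
    (hΩn : ∀ n, MeasurableSet (Ωn n)) (hΩnD : ∀ n, Ωn n ⊆ D)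
    (hweakstar : ∀ φ : (Fin 2 → ℝ) → ℝ, Integrable φ (volume.restrict D) →
      Tendsto (fun n => ∫ x, Set.indicator (Ωn n) (fun _ => (1 : ℝ)) x * φ x
          ∂(volume.restrict D)) atTop
        (𝓝 (∫ x, Set.indicator Ω (fun _ => (1 : ℝ)) x * φ x ∂(volume.restrict D))))
    (f g : (Fin 2 → ℝ) → ℝ) (fn gn : ℕ → (Fin 2 → ℝ) → ℝ)
    (hf : MemLp f 2 (volume.restrict D)) (hg : MemLp g 2 (volume.restrict D))
    (hfn : ∀ n, MemLp (fn n) 2 (volume.restrict D))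
    (hgn : ∀ n, MemLp (gn n) 2 (volume.restrict D))
    (hfstrong : Tendsto (fun n => ∫ x, (fn n x - f x)^2 ∂(volume.restrict D)) atTop (𝓝 0))
    (hgweak : ∀ φ : (Fin 2 → ℝ) → ℝ, MemLp φ 2 (volume.restrict D) →
      Tendsto (fun n => ∫ x, gn n x * φ x ∂(volume.restrict D)) atTop
        (𝓝 (∫ x, g x * φ x ∂(volume.restrict D)))) :
    Tendsto (fun n => ∫ x, Set.indicator (Ωn n) (fun _ => (1 : ℝ)) x * fn n x * gn n x
        ∂(volume.restrict D)) atTop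
      (𝓝 (∫ x, Set.indicator Ω (fun _ => (1 : ℝ)) x * f x * g x ∂(volume.restrict D))) := by
  set μ := volume.restrict D with hμdef
  set χ := Set.indicator Ω (fun _ => (1 : ℝ)) with hχdef
  set χn := fun n => Set.indicator (Ωn n) (fun _ => (1 : ℝ)) with hχndef
  -- MemLp facts
  have hχf : MemLp (fun x => χ x * f x) 2 μ := aux_memLp_ind hΩ hf
  have hχnf : ∀ n, MemLp (fun x => χn n x * f x) 2 μ := fun n => aux_memLp_ind (hΩn n) hf
  have hχnfn : ∀ n, MemLp (fun x => χn n x * fn n x) 2 μ := fun n => aux_memLp_ind (hΩn n) (hfn n)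
  have hΔ : ∀ n, MemLp (fun x => fn n x - f x) 2 μ := fun n => (hfn n).sub hf
  have hχnΔ : ∀ n, MemLp (fun x => χn n x * (fn n x - f x)) 2 μ :=
    fun n => aux_memLp_ind (hΩn n) (hΔ n)
  have hw : ∀ n, MemLp (fun x => χn n x * f x - χ x * f x) 2 μ :=
    fun n => (hχnf n).sub hχf
  have hDn : ∀ n, MemLp (fun x => χn n x * fn n x - χ x * f x) 2 μ :=
    fun n => (hχnfn n).sub hχf
  -- Step A: strong convergence of fn
  have hnormΔ : Tendsto (fun n => ‖(hΔ n).toLp _‖) atTop (𝓝 0) :=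
    aux_tendsto_norm_zero hΔ hfstrong
  -- Step B: strong L² convergence of χn·f to χ·f
  have hφ1 : Integrable (fun x => (f x) ^ 2) μ := by
    simpa only [← pow_two] using aux_integrable_mul hf hf
  have hφ2 : Integrable (fun x => χ x * (f x) ^ 2) μ := aux_int_ind hΩ hφ1
  have hA := hweakstar (fun x => (f x) ^ 2) hφ1
  have hB := hweakstar (fun x => χ x * (f x) ^ 2) hφ2
  have hχχ : ∫ x, χ x * (χ x * (f x) ^ 2) ∂μ = ∫ x, χ x * (f x) ^ 2 ∂μ := by
    apply integral_congr_ae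
    refine Filter.Eventually.of_forall fun x => ?_
    by_cases h : x ∈ Ω <;> simp [hχdef, h]
  have hwsq : ∀ n, (∫ x, (χn n x * f x - χ x * f x) ^ 2 ∂μ) =
      (∫ x, χn n x * (f x) ^ 2 ∂μ) - 2 * (∫ x, χn n x * (χ x * (f x) ^ 2) ∂μ)
        + ∫ x, χ x * (f x) ^ 2 ∂μ := by
    intro n
    have h1 : Integrable (fun x => χn n x * (f x) ^ 2) μ := aux_int_ind (hΩn n) hφ1
    have h2 : Integrable (fun x => χn n x * (χ x * (f x) ^ 2)) μ := aux_int_ind (hΩn n) hφ2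
    have h3 : Integrable (fun x => χ x * (f x) ^ 2) μ := hφ2
    have h2' : Integrable (fun x => 2 * (χn n x * (χ x * (f x) ^ 2))) μ := h2.const_mul 2
    have hsub : Integrable (fun x => χn n x * (f x) ^ 2
        - 2 * (χn n x * (χ x * (f x) ^ 2))) μ :=
      (h1.sub h2').congr (Filter.Eventually.of_forall fun x => rfl)
    rw [← integral_const_mul, ← integral_sub h1 h2', ← integral_add hsub h3]
    apply integral_congr_ae
    refine Filter.Eventually.of_forall fun x => ?_
    by_cases ha : x ∈ Ωn n <;> by_cases hb : x ∈ Ω <;>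
      simp [hχdef, hχndef, ha, hb] <;> ring
  have hwsq0 : Tendsto (fun n => ∫ x, (χn n x * f x - χ x * f x) ^ 2 ∂μ) atTop (𝓝 0) := by
    have := (hA.sub (hB.const_mul 2)).add (tendsto_const_nhds
      (x := ∫ x, χ x * (f x) ^ 2 ∂μ) (f := atTop))
    rw [hχχ] at this
    replace this := this.congr (fun n => (hwsq n).symm)
    convert this using 2
    ring
  have hnormw : Tendsto (fun n => ‖(hw n).toLp _‖) atTop (𝓝 0) :=
    aux_tendsto_norm_zero hw hwsq0
  -- Step C: uniform bound on gn via Banach-Steinhaus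
  obtain ⟨C, hC⟩ : ∃ C, ∀ n, ‖(hgn n).toLp (gn n)‖ ≤ C := by
    have hbd : ∀ φ : Lp ℝ 2 μ, ∃ c, ∀ n,
        ‖(innerSL ℝ ((hgn n).toLp (gn n))) φ‖ ≤ c := by
      intro φ
      have hφ : MemLp (φ : (Fin 2 → ℝ) → ℝ) 2 μ := Lp.memLp φ
      have ht := (hgweak _ hφ).norm
      obtain ⟨c, hc⟩ := ht.bddAbove_range
      refine ⟨c, fun n => ?_⟩
      have heq := aux_inner_eq (hgn n) hφ
      rw [MeasureTheory.Lp.toLp_coeFn φ hφ] at heq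
      have : (innerSL ℝ ((hgn n).toLp (gn n))) φ = ∫ x, gn n x * φ x ∂μ := by
        rw [innerSL_apply_apply]; exact heq
      rw [this]
      exact hc (Set.mem_range_self n)
    obtain ⟨C, hC⟩ := banach_steinhaus hbd
    exact ⟨C, fun n => by rw [← innerSL_apply_norm (𝕜 := ℝ)]; exact hC n⟩
  -- Step D: convergence of ‖Dn‖ to 0
  have hsplit : ∀ n, (hDn n).toLp _ = (hχnΔ n).toLp _ + (hw n).toLp _ := by
    intro n
    rw [← MemLp.toLp_add]
    exact MemLp.toLp_congr _ _ (Filter.Eventually.of_forall fun x => by simp; ring)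
  have hnormχnΔ : ∀ n, ‖(hχnΔ n).toLp _‖ ≤ ‖(hΔ n).toLp _‖ := by
    intro n
    refine aux_norm_mono _ _ fun x => ?_
    by_cases h : x ∈ Ωn n <;> simp [hχndef, h, abs_nonneg]
  have hnormDn : Tendsto (fun n => ‖(hDn n).toLp _‖) atTop (𝓝 0) := by
    have h0 : Tendsto (fun n => ‖(hΔ n).toLp _‖ + ‖(hw n).toLp _‖) atTop (𝓝 0) := by
      simpa only [add_zero] using hnormΔ.add hnormw
    refine squeeze_zero (fun n => norm_nonneg _) (fun n => ?_) h0
    rw [hsplit n]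
    exact (norm_add_le _ _).trans (add_le_add (hnormχnΔ n) le_rfl)
  -- Step E: assembly
  have hterm2 := hgweak (fun x => χ x * f x) hχf
  have hdecomp : ∀ n, (∫ x, χn n x * fn n x * gn n x ∂μ) =
      (∫ x, gn n x * (χn n x * fn n x - χ x * f x) ∂μ) + ∫ x, gn n x * (χ x * f x) ∂μ := by
    intro n
    rw [← integral_add (aux_integrable_mul (hgn n) (hDn n)) (aux_integrable_mul (hgn n) hχf)]
    exact integral_congr_ae (Filter.Eventually.of_forall fun x => by ring)
  have hterm1 : Tendsto (fun n => ∫ x, gn n x * (χn n x * fn n x - χ x * f x) ∂μ)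
      atTop (𝓝 0) := by
    have h0 : Tendsto (fun n => C * ‖(hDn n).toLp _‖) atTop (𝓝 0) := by
      simpa only [mul_zero] using hnormDn.const_mul C
    refine squeeze_zero_norm (fun n => ?_) h0
    calc ‖∫ x, gn n x * (χn n x * fn n x - χ x * f x) ∂μ‖
        ≤ ‖(hgn n).toLp _‖ * ‖(hDn n).toLp _‖ := aux_CS (hgn n) (hDn n)
      _ ≤ C * ‖(hDn n).toLp _‖ :=
          mul_le_mul_of_nonneg_right (hC n) (norm_nonneg _)
  have hfinal := hterm1.add hterm2
  rw [zero_add] at hfinal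
  have : (∫ x, g x * (χ x * f x) ∂μ) = ∫ x, χ x * f x * g x ∂μ :=
    integral_congr_ae (Filter.Eventually.of_forall fun x => by ring)
  rw [this] at hfinal
  refine hfinal.congr fun n => (hdecomp n).symm
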